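/- Suppose |r(λ_n)| > 0 and that the n×n matrix X_n* B Y_0 is invertible. Then for each j = 1,…,n there exists a constant α_j ≥ 0 such that for all iterations k ≥ 1, min over z in the column span of Z_k of ‖x_j − z‖_B ≤ α_j · |r(λ_{n+1})/r(λ_j)|^k. Equivalently, ‖(I − P_k) x_j‖_B ≤ α_j |r(λ_{n+1})/r(λ_j)|^k where P_k is the B-orthogonal projector onto the column span of Z_k. -/

import Mathlib

open Matrix ComplexOrder

/-- **FEAST convergence theorem** (Güttel–Polizzi–Tang–Viaud, Theorem 2.2; adapted from
Saad).  If `|r(λ_n)| > 0` and `X_nᴴ B Y_0` is invertible, then for each `j = 1,…,n`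
there is a constant `α_j ≥ 0` such that, for all `k ≥ 1`, the `B`-norm distance of the
eigenvector `x_j` to the column span of `Z_k` is at most
`α_j · |r(λ_{n+1})/r(λ_j)|^k`. -/
theorem feast_subspace_iteration_bound
    (N n : ℕ) (hn1 : 1 ≤ n) (hnN : n < N)
    (A B X : Matrix (Fin N) (Fin N) ℂ)
    (hB : B.PosDef)
    (lam : Fin N → ℝ)
    (hX : Xᴴ * B * X = 1)
    (hM : B⁻¹ * A = X * Matrix.diagonal (fun i => (lam i : ℂ)) * X⁻¹)
    (r : ℝ → ℂ)
    (hord : ∀ i j : Fin N, i ≤ j → ‖r (lam j)‖ ≤ ‖r (lam i)‖)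
    (rM : Matrix (Fin N) (Fin N) ℂ)
    (hrM : rM = X * Matrix.diagonal (fun i => r (lam i)) * X⁻¹)
    (Y Z : ℕ → Matrix (Fin N) (Fin n) ℂ)
    (W : ℕ → Matrix (Fin n) (Fin n) ℂ)
    (hZ : ∀ k, Z (k + 1) = rM * Y k)
    (hW : ∀ k, (W (k + 1))ᴴ * ((Z (k + 1))ᴴ * B * Z (k + 1)) * W (k + 1) = 1)
    (hY : ∀ k, Y (k + 1) = Z (k + 1) * W (k + 1))
    (Xn : Matrix (Fin N) (Fin n) ℂ)
    (hXn : Xn = X.submatrix id (Fin.castLE hnN.le))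
    (hrn : 0 < ‖r (lam ⟨n - 1, by omega⟩)‖)
    (hY0 : IsUnit (Xnᴴ * B * Y 0))
    (Bnorm : (Fin N → ℂ) → ℝ)
    (hBnorm : ∀ w, Bnorm w = Real.sqrt ((star w ⬝ᵥ B.mulVec w).re)) :
    ∀ j : Fin N, (j : ℕ) < n →
      ∃ α : ℝ, 0 ≤ α ∧ ∀ k, 1 ≤ k →
        sInf {t : ℝ | ∃ z ∈ LinearMap.range (Z k).mulVecLin,
            t = Bnorm ((fun i => X i j) - z)}
          ≤ α * (‖r (lam ⟨n, hnN⟩)‖ / ‖r (lam j)‖) ^ k := by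
  -- basic facts about X
  have hXu : (Xᴴ * B) * X = 1 := hX
  have hXinv : X⁻¹ = Xᴴ * B := Matrix.inv_eq_left_inv hXu
  have hXX : X * X⁻¹ = 1 := by rw [hXinv]; exact mul_eq_one_comm.mp hXu
  have hX'X : X⁻¹ * X = 1 := by rw [hXinv]; exact hXu
  -- powers of rM
  have hpow : ∀ k : ℕ, rM ^ k =
      X * Matrix.diagonal (fun i => (r (lam i)) ^ k) * X⁻¹ := by
    intro k
    induction k with
    | zero => simp [hXX]
    | succ k ih =>
      rw [pow_succ, ih, hrM]
      simp only [Matrix.mul_assoc]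
      rw [← Matrix.mul_assoc X⁻¹ X, hX'X, Matrix.one_mul,
        ← Matrix.mul_assoc (Matrix.diagonal fun i => (r (lam i)) ^ k),
        Matrix.diagonal_mul_diagonal]
      simp [pow_succ, Matrix.mul_assoc]
  -- the W's are invertible
  have hWu : ∀ k, IsUnit (W (k + 1)) := by
    intro k
    have h := hW k
    have hd : (W (k + 1))ᴴ.det * ((Z (k + 1))ᴴ * B * Z (k + 1)).det * (W (k + 1)).det = 1 := by
      rw [← Matrix.det_mul, ← Matrix.det_mul, h, Matrix.det_one]
    rw [Matrix.isUnit_iff_isUnit_det]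
    exact IsUnit.of_mul_eq_one _ (by rw [mul_comm]; exact hd)
  -- structure of Z k
  have hZk : ∀ k : ℕ, ∃ P : Matrix (Fin n) (Fin n) ℂ,
      IsUnit P ∧ Z (k + 1) = rM ^ (k + 1) * Y 0 * P := by
    intro k
    induction k with
    | zero => exact ⟨1, isUnit_one, by simp [hZ 0]⟩
    | succ k ih =>
      obtain ⟨P, hP, hZP⟩ := ih
      refine ⟨P * W (k + 1), hP.mul (hWu k), ?_⟩
      rw [hZ (k + 1), hY k, hZP]
      simp only [← Matrix.mul_assoc]
      rw [← pow_succ']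
  -- the coefficient matrix
  set C : Matrix (Fin N) (Fin n) ℂ := Xᴴ * B * Y 0 with hC
  have hCeq : X⁻¹ * Y 0 = C := by rw [hXinv, hC]
  set Cn : Matrix (Fin n) (Fin n) ℂ := C.submatrix (Fin.castLE hnN.le) id with hCnd
  have hCn : Xnᴴ * B * Y 0 = Cn := by
    ext i m
    simp [hXn, hCnd, hC, Matrix.mul_apply, Matrix.conjTranspose_apply, Matrix.submatrix_apply]
  have hCnu : IsUnit Cn := hCn ▸ hY0
  have hCninv : Cn * Cn⁻¹ = 1 :=
    Matrix.mul_nonsing_inv _ ((Matrix.isUnit_iff_isUnit_det Cn).mp hCnu)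
  intro j hj
  set j' : Fin n := ⟨j, hj⟩ with hj'
  -- r (lam j) ≠ 0
  have hrjpos : 0 < ‖r (lam j)‖ :=
    lt_of_lt_of_le hrn (hord j ⟨n - 1, by omega⟩ (by rw [Fin.le_def]; simp; omega))
  have hrj : r (lam j) ≠ 0 := by
    intro h; rw [h] at hrjpos; simp at hrjpos
  -- the constant vector c and α
  set c : Fin N → ℂ := C *ᵥ (Cn⁻¹ *ᵥ Pi.single j' 1) with hc
  set S : ℝ := ∑ i : Fin N, (if (i : ℕ) < n then 0 else Complex.normSq (c i)) with hS
  have hS0 : 0 ≤ S := Finset.sum_nonneg fun i _ => by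
    split <;> [rfl; exact Complex.normSq_nonneg _]
  refine ⟨Real.sqrt S, Real.sqrt_nonneg _, ?_⟩
  intro k hk
  obtain ⟨k', rfl⟩ : ∃ k'', k = k'' + 1 := ⟨k - 1, by omega⟩
  set K := k' + 1 with hK
  obtain ⟨P, hP, hZP⟩ := hZk k'
  set ρ : ℝ := ‖r (lam ⟨n, hnN⟩)‖ / ‖r (lam j)‖ with hρ
  have hρ0 : 0 ≤ ρ := div_nonneg (norm_nonneg _) (norm_nonneg _)
  set t : ℂ := ((r (lam j)) ^ K)⁻¹ with ht
  set v : Fin n → ℂ := t • (Cn⁻¹ *ᵥ Pi.single j' 1) with hv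
  set z : Fin N → ℂ := (rM ^ K * Y 0) *ᵥ v with hz
  -- z is in the range of Z K
  have hzmem : z ∈ LinearMap.range (Z K).mulVecLin := by
    refine ⟨P⁻¹ *ᵥ v, ?_⟩
    rw [Matrix.mulVecLin_apply, Matrix.mulVec_mulVec, hZP, Matrix.mul_assoc,
      Matrix.mul_nonsing_inv _ ((Matrix.isUnit_iff_isUnit_det P).mp hP), Matrix.mul_one]
  -- the difference vector
  set f : Fin N → ℂ := fun i => (r (lam i)) ^ K with hf
  set d : Fin N → ℂ := Pi.single j 1 - (Matrix.diagonal f * C) *ᵥ v with hd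
  have hxz : (fun i => X i j) - z = X *ᵥ d := by
    have h1 : rM ^ K * Y 0 = X * (Matrix.diagonal f * C) := by
      rw [hpow K, Matrix.mul_assoc, Matrix.mul_assoc, hCeq]
    have h2 : z = X *ᵥ ((Matrix.diagonal f * C) *ᵥ v) := by
      rw [hz, h1, Matrix.mulVec_mulVec]
    have h3 : (fun i => X i j) = X *ᵥ Pi.single j 1 := by
      funext i; simp
    rw [h2, h3, hd, Matrix.mulVec_sub]
  -- the value of d
  have hDCv : ∀ i, ((Matrix.diagonal f * C) *ᵥ v) i = f i * (t * c i) := by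
    intro i
    rw [← Matrix.mulVec_mulVec, hv, Matrix.mulVec_smul, ← hc]
    simp [Matrix.mulVec_diagonal, mul_comm]
  have hclt : ∀ (i : Fin N) (hi : (i : ℕ) < n), c i = (Pi.single j' (1 : ℂ) : Fin n → ℂ) ⟨i, hi⟩ := by
    intro i hi
    have hrow : ∀ m, C i m = Cn ⟨i, hi⟩ m := by
      intro m
      rw [hCnd, Matrix.submatrix_apply]
      congr 1
    have : c i = (Cn *ᵥ (Cn⁻¹ *ᵥ Pi.single j' 1)) ⟨i, hi⟩ := by
      rw [hc]
      simp only [Matrix.mulVec, dotProduct, hrow]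
    rw [this, Matrix.mulVec_mulVec, hCninv]
    simp [Matrix.one_mulVec, Matrix.one_apply, Pi.single_apply, eq_comm]
  have hdlt : ∀ (i : Fin N), (i : ℕ) < n → d i = 0 := by
    intro i hi
    rw [hd, Pi.sub_apply, hDCv, hclt i hi]
    rcases eq_or_ne i j with h | h
    · subst h
      have : (⟨(i : ℕ), hi⟩ : Fin n) = j' := by rw [hj']
      rw [this]
      simp only [Pi.single_eq_same]
      rw [hf, ht]
      field_simp
      norm_num
    · have hne : (⟨(i : ℕ), hi⟩ : Fin n) ≠ j' := by
        intro hcon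
        apply h
        have := congrArg Fin.val hcon
        simp [hj'] at this
        exact Fin.ext this
      rw [Pi.single_eq_of_ne hne, Pi.single_eq_of_ne h]
      ring
  have hdge : ∀ (i : Fin N), ¬ (i : ℕ) < n → d i = -(f i * (t * c i)) := by
    intro i hi
    rw [hd, Pi.sub_apply, hDCv, Pi.single_eq_of_ne, zero_sub]
    intro hcon
    apply hi
    rw [hcon]
    exact hj
  -- norm identity
  have hnorm : Bnorm ((fun i => X i j) - z) =
      Real.sqrt (∑ i, Complex.normSq (d i)) := by
    rw [hBnorm, hxz]
    congr 1
    have key : star (X *ᵥ d) ⬝ᵥ B *ᵥ (X *ᵥ d) = star d ⬝ᵥ d := by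
      rw [Matrix.star_mulVec, Matrix.mulVec_mulVec, Matrix.dotProduct_mulVec,
        Matrix.vecMul_vecMul, ← Matrix.mul_assoc, hX, Matrix.vecMul_one]
    rw [key]
    rw [dotProduct, Complex.re_sum]
    congr 1
    funext i
    rw [Pi.star_apply, Complex.star_def, ← Complex.normSq_eq_conj_mul_self]
    simp
  -- the inequality
  have hsum : ∑ i, Complex.normSq (d i) ≤ (ρ ^ K) ^ 2 * S := by
    rw [hS, Finset.mul_sum]
    apply Finset.sum_le_sum
    intro i _
    by_cases hi : (i : ℕ) < n
    · rw [hdlt i hi]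
      simp [hi]
    · rw [hdge i hi, if_neg hi]
      rw [Complex.normSq_neg, ← Complex.sq_norm, ← Complex.sq_norm (c i)]
      have habs : ‖f i * (t * c i)‖ ≤ ρ ^ K * ‖c i‖ := by
        rw [norm_mul, norm_mul, hf, ht, norm_inv,
          norm_pow, norm_pow, hρ, div_pow]
        have h1 : ‖r (lam i)‖ ≤ ‖r (lam ⟨n, hnN⟩)‖ := by
          apply hord
          rw [Fin.le_def]
          simpa using not_lt.mp hi
        have h2 : (0:ℝ) < ‖r (lam j)‖ ^ K := pow_pos hrjpos K
        rw [← mul_assoc, div_eq_mul_inv]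
        gcongr
      calc ‖f i * (t * c i)‖ ^ 2 ≤ (ρ ^ K * ‖c i‖) ^ 2 := by
            apply pow_le_pow_left₀ (norm_nonneg _) habs
        _ = (ρ ^ K) ^ 2 * ‖c i‖ ^ 2 := by ring
  -- conclude via sInf
  have hbdd : BddBelow {u : ℝ | ∃ z ∈ LinearMap.range (Z K).mulVecLin,
      u = Bnorm ((fun i => X i j) - z)} := by
    refine ⟨0, ?_⟩
    rintro u ⟨w, -, rfl⟩
    rw [hBnorm]
    exact Real.sqrt_nonneg _
  have hmem : Bnorm ((fun i => X i j) - z) ∈ {u : ℝ | ∃ z ∈ LinearMap.range (Z K).mulVecLin,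
      u = Bnorm ((fun i => X i j) - z)} := ⟨z, hzmem, rfl⟩
  refine le_trans (csInf_le hbdd hmem) ?_
  rw [hnorm]
  calc Real.sqrt (∑ i, Complex.normSq (d i)) ≤ Real.sqrt ((ρ ^ K) ^ 2 * S) :=
        Real.sqrt_le_sqrt hsum
    _ = ρ ^ K * Real.sqrt S := by
        rw [Real.sqrt_mul (sq_nonneg _), Real.sqrt_sq (pow_nonneg hρ0 K)]
    _ = Real.sqrt S * ρ ^ K := mul_comm _ _
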